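/- Let a2, gamma, alpha, betastar, k, c, h, sigma2, sigma3 > 0 and epsilon > 0. For x, S, I > 0 set beta(S,I) = betastar/(S + I + k) and P = epsilon*S + I. Then: ( epsilon*( S*(a2 - (1/(c + x) + h)*(S + I)) - beta(S,I)*S*I + gamma*I ) + beta(S,I)*S*I - alpha*I ) / P - ( epsilon^2*sigma2^2*S^2 + sigma3^2*I^2 ) / (2*P^2) <= epsilon*max{|betastar - gamma|, gamma} + max{betastar - alpha, a2} - 1/(2*(1/sigma2^2 + 1/sigma3^2)). -/
import Mathlib


theorem stmt_7 (a2 gamma alpha betastar k c h sigma2 sigma3 epsilon : ℝ)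
    (ha2 : 0 < a2) (hgamma : 0 < gamma) (halpha : 0 < alpha)
    (hbetastar : 0 < betastar) (hk : 0 < k) (hc : 0 < c) (hh : 0 < h)
    (hsigma2 : 0 < sigma2) (hsigma3 : 0 < sigma3) (hepsilon : 0 < epsilon) :
    ∀ x S I : ℝ, 0 < x → 0 < S → 0 < I →
      (epsilon * (S * (a2 - (1 / (c + x) + h) * (S + I))
          - (betastar / (S + I + k)) * S * I + gamma * I)
        + (betastar / (S + I + k)) * S * I - alpha * I) / (epsilon * S + I)
      - (epsilon ^ 2 * sigma2 ^ 2 * S ^ 2 + sigma3 ^ 2 * I ^ 2)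
          / (2 * (epsilon * S + I) ^ 2)
      ≤ epsilon * max |betastar - gamma| gamma + max (betastar - alpha) a2
          - 1 / (2 * (1 / sigma2 ^ 2 + 1 / sigma3 ^ 2)) := by
  intro x S I hx hS hI
  have hP : 0 < epsilon * S + I := by positivity
  set K := max |betastar - gamma| gamma with hK
  set M := max (betastar - alpha) a2 with hM
  have hK0 : 0 ≤ K := le_trans hgamma.le (le_max_right _ _)
  have hgK : gamma ≤ K := le_max_right _ _
  have ha2M : a2 ≤ M := le_max_right _ _
  have hbaM : betastar - alpha ≤ M := le_max_left _ _
  set b := betastar / (S + I + k) with hb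
  have hb0 : 0 < b := by positivity
  have hbS : b * S ≤ betastar := by
    rw [hb, div_mul_eq_mul_div, div_le_iff₀ (by positivity)]
    nlinarith
  have hd : 0 ≤ (1 / (c + x) + h) * (S + I) := by positivity
  -- drift bound
  have step1 : (epsilon * (S * (a2 - (1 / (c + x) + h) * (S + I))
          - b * S * I + gamma * I) + b * S * I - alpha * I) / (epsilon * S + I)
      ≤ epsilon * K + M := by
    rw [div_le_iff₀ hP]
    nlinarith [mul_nonneg (mul_nonneg hepsilon.le hS.le) (sub_nonneg.2 ha2M),
      mul_nonneg hI.le (sub_nonneg.2 (le_trans (by linarith) hbaM : b * S - alpha ≤ M)),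
      mul_nonneg (mul_nonneg hepsilon.le hI.le)
        (sub_nonneg.2 (le_trans (by nlinarith [mul_pos hb0 hS]) hgK : gamma - b * S ≤ K)),
      mul_nonneg (mul_nonneg hepsilon.le hS.le) hd,
      mul_nonneg (mul_nonneg (mul_nonneg hepsilon.le hK0) hepsilon.le) hS.le]
  -- noise bound
  have key : (epsilon * S + I) ^ 2
      ≤ (1 / sigma2 ^ 2 + 1 / sigma3 ^ 2)
        * (epsilon ^ 2 * sigma2 ^ 2 * S ^ 2 + sigma3 ^ 2 * I ^ 2) := by
    rw [div_add_div _ _ (by positivity) (by positivity), div_mul_eq_mul_div,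
      le_div_iff₀ (by positivity)]
    nlinarith [sq_nonneg (epsilon * sigma2 ^ 2 * S - sigma3 ^ 2 * I)]
  have step2 : 1 / (2 * (1 / sigma2 ^ 2 + 1 / sigma3 ^ 2))
      ≤ (epsilon ^ 2 * sigma2 ^ 2 * S ^ 2 + sigma3 ^ 2 * I ^ 2)
          / (2 * (epsilon * S + I) ^ 2) := by
    rw [div_le_div_iff₀ (by positivity) (by positivity)]
    ring_nf
    ring_nf at key
    linarith
  linarith [step1, step2]
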